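/- arXiv:1805.11057 — 4 statements merged into one kernel-verified Lean document; each statement's English description precedes it below -/
import Mathlib

section
/- Let d be a metric on X and G : ℝ^m → X measurable. Then the unconstrained optimum inf over maps F : X → ℝ^m with F(X) ~ P_Z of E[d(X, G(F(X)))] is lower-bounded by W_d(P_X, P_{G(Z)}), where Z ~ P_Z. -/
open MeasureTheory ENNReal

/-- Wasserstein "distance" with cost `c`: infimum of the expected cost over all couplings. -/
noncomputable def Wd {X : Type*} [MeasurableSpace X] (c : X → X → ℝ≥0∞)
    (P Q : Measure X) : ℝ≥0∞ :=
  ⨅ π ∈ {π : Measure (X × X) | π.map Prod.fst = P ∧ π.map Prod.snd = Q},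
    ∫⁻ p, c p.1 p.2 ∂π

/-- The unconstrained objective `E[d(X, G(F(X)))]`, over (possibly stochastic) maps `F`
with `F(X) ~ P_Z`, is lower-bounded by `W_d(P_X, P_{G(Z)})`. -/
theorem stmt8 {𝒳 V Ω : Type*} [MetricSpace 𝒳] [MeasurableSpace 𝒳] [BorelSpace 𝒳]
    [MeasurableSpace V] [MeasurableSpace Ω]
    (μ : Measure Ω) [IsProbabilityMeasure μ]
    (G : V → 𝒳) (hG : Measurable G)
    (X : Ω → 𝒳) (hX : Measurable X)
    (PZ : Measure V) [IsProbabilityMeasure PZ]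
    (F : Ω → V) (hF : Measurable F) (hFZ : μ.map F = PZ) :
    Wd (fun x y => edist x y) (μ.map X) (PZ.map G)
      ≤ ∫⁻ ω, edist (X ω) (G (F ω)) ∂μ := by
  have hT : Measurable (fun ω => (X ω, G (F ω))) := hX.prodMk (hG.comp hF)
  have h1 : (μ.map (fun ω => (X ω, G (F ω)))).map Prod.fst = μ.map X := by
    rw [Measure.map_map measurable_fst hT]; rfl
  have h2 : (μ.map (fun ω => (X ω, G (F ω)))).map Prod.snd = PZ.map G := by
    rw [Measure.map_map measurable_snd hT, ← hFZ, Measure.map_map hG hF]; rfl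
  calc Wd (fun x y => edist x y) (μ.map X) (PZ.map G)
      ≤ ∫⁻ p, edist p.1 p.2 ∂(μ.map (fun ω => (X ω, G (F ω)))) :=
        iInf₂_le _ ⟨h1, h2⟩
    _ ≤ ∫⁻ ω, edist (X ω) (G (F ω)) ∂μ := lintegral_map_le (fun p : 𝒳 × 𝒳 => edist p.1 p.2) _
end

section
/- Let d be a metric on X, G : ℝ^m → X K-Lipschitz with respect to norm ‖·‖, and suppose there exists F⋆ : X → ℝ^m with F⋆(X) ~ P_Z achieving E[d(X, G(F⋆(X)))] = W_d(P_X, P_{G(Z)}). Suppose further there exists a quantizer q with 2^R centers such that E[‖F⋆(X) − q(F⋆(X))‖] ≤ ε. Then there exist a rate-constrained encoder E : X → {1,…,2^R} and a stochastic map B : {1,…,2^R} → ℝ^m with B(E(X)) ~ P_Z such that E[d(X, G(B(E(X))))] ≤ W_d(P_X, P_{G(Z)}) + 2Kε. -/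
open MeasureTheory ENNReal

/-- Given a `K`-Lipschitz generator `G`, an optimal unconstrained encoder `F⋆` with
`F⋆(X) ~ P_Z` achieving the Wasserstein distance, and a nearest-neighbor quantizer with
`2^R` centers whose expected quantization error is at most `ε`, there exist a
rate-constrained encoder `Enc : 𝒳 → {1,…,2^R}` and a stochastic map `B` such that
`B(Enc(X)) ~ P_Z` and `E[d(X, G(B(Enc(X))))] ≤ W_d(P_X, P_{G(Z)}) + 2Kε`. -/
theorem stmt9 {𝒳 V Ω : Type*} [MetricSpace 𝒳] [MeasurableSpace 𝒳] [BorelSpace 𝒳]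
    [NormedAddCommGroup V] [MeasurableSpace V] [BorelSpace V]
    [MeasurableSpace Ω] (μ : Measure Ω) [IsProbabilityMeasure μ]
    (G : V → 𝒳) (hGm : Measurable G) (K : ℝ) (hK : 0 ≤ K)
    (hG : ∀ z z', dist (G z) (G z') ≤ K * ‖z - z'‖)
    (X : Ω → 𝒳) (hX : Measurable X)
    (PZ : Measure V) [IsProbabilityMeasure PZ]
    (Fstar : 𝒳 → V) (hFm : Measurable Fstar)
    (hFdist : μ.map (fun ω => Fstar (X ω)) = PZ)
    (hFopt : ∫⁻ ω, edist (X ω) (G (Fstar (X ω))) ∂μ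
      = Wd (fun x y => edist x y) (μ.map X) (PZ.map G))
    (R : ℕ) (cc : Fin (2 ^ R) → V) (q : V → Fin (2 ^ R)) (hqm : Measurable q)
    (hq : ∀ z j, ‖z - cc (q z)‖ ≤ ‖z - cc j‖)
    (ε : ℝ) (hε : 0 ≤ ε)
    (hqe : ∫⁻ ω, ENNReal.ofReal ‖Fstar (X ω) - cc (q (Fstar (X ω)))‖ ∂μ
      ≤ ENNReal.ofReal ε) :
    ∃ (Enc : 𝒳 → Fin (2 ^ R)) (B : Fin (2 ^ R) → Measure V),
      (∀ i, IsProbabilityMeasure (B i)) ∧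
      (μ.bind fun ω => (B (Enc (X ω))).map fun z => ((X ω, z) : 𝒳 × V)).map Prod.snd
        = PZ ∧
      ∫⁻ p, edist p.1 (G p.2)
          ∂(μ.bind fun ω => (B (Enc (X ω))).map fun z => ((X ω, z) : 𝒳 × V))
        ≤ Wd (fun x y => edist x y) (μ.map X) (PZ.map G) + ENNReal.ofReal (2 * K * ε) := by
  classical
  set A : Fin (2 ^ R) → Set V := fun i => q ⁻¹' {i} with hA
  have hAm : ∀ i, MeasurableSet (A i) := fun i => hqm (measurableSet_singleton i)
  set B : Fin (2 ^ R) → Measure V := fun i =>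
    if PZ (A i) = 0 then Measure.dirac (cc i) else ProbabilityTheory.cond PZ (A i) with hB
  have hBprob : ∀ i, IsProbabilityMeasure (B i) := by
    intro i
    rw [hB]
    dsimp only
    split_ifs with h
    · infer_instance
    · exact ProbabilityTheory.cond_isProbabilityMeasure h
  have hBmeas : Measurable B := .of_discrete
  set Enc : 𝒳 → Fin (2 ^ R) := fun x => q (Fstar x) with hEnc
  have hEX : Measurable fun ω => Enc (X ω) := hqm.comp (hFm.comp hX)
  have hBE : Measurable fun ω => B (Enc (X ω)) := hBmeas.comp hEX
  -- the joint kernel, used for measurability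
  set η : ProbabilityTheory.Kernel Ω V :=
    ⟨fun ω => B (Enc (X ω)), hBE⟩ with hη
  have : ProbabilityTheory.IsMarkovKernel η := ⟨fun ω => hBprob _⟩
  set κ : ProbabilityTheory.Kernel Ω (𝒳 × V) :=
    ProbabilityTheory.Kernel.prod (ProbabilityTheory.Kernel.deterministic X hX) η with hκdef
  set f : Ω → Measure (𝒳 × V) :=
    fun ω => (B (Enc (X ω))).map fun z => ((X ω, z) : 𝒳 × V) with hf
  have hκ : ∀ ω, κ ω = f ω := by
    intro ω
    rw [hκdef, ProbabilityTheory.Kernel.prod_apply, ProbabilityTheory.Kernel.deterministic_apply,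
      Measure.dirac_prod]
    rfl
  have hfmeas : Measurable f := by
    have : f = κ := funext fun ω => (hκ ω).symm
    rw [this]; exact κ.measurable
  have hBq : Measurable fun z => B (q z) := hBmeas.comp hqm
  -- the mixture of the cell-conditional measures is PZ
  have hPZbind : PZ.bind (fun z => B (q z)) = PZ := by
    ext s hs
    rw [Measure.bind_apply hs hBq.aemeasurable]
    calc ∫⁻ z, B (q z) s ∂PZ
        = ∫⁻ i, B i s ∂(PZ.map q) :=
          (lintegral_map ((Measure.measurable_coe hs).comp hBmeas) hqm).symm
      _ = ∑ i, B i s * (PZ.map q) {i} := lintegral_fintype _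
      _ = ∑ i, PZ (A i ∩ s) := by
          refine Finset.sum_congr rfl fun i _ => ?_
          rw [Measure.map_apply hqm (measurableSet_singleton i)]
          by_cases h0 : PZ (A i) = 0
          · have : PZ (A i ∩ s) = 0 :=
              measure_mono_null Set.inter_subset_left h0
            rw [hA] at h0 ⊢
            simp [hB, h0, this]
            exact this.symm
          · rw [hB]
            simp only [if_neg h0]
            rw [ProbabilityTheory.cond_apply (hAm i), mul_comm, ← mul_assoc,
              ENNReal.mul_inv_cancel h0 (measure_ne_top _ _), one_mul]
      _ = PZ s := by
          have hdisj : Pairwise (Function.onFun Disjoint fun i => A i ∩ s) := by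
            intro i j hij
            refine Set.disjoint_left.2 fun z hzi hzj => hij ?_
            have h1 : q z = i := hzi.1
            have h2 : q z = j := hzj.1
            rw [← h1, h2]
          have hcover : (⋃ i, A i ∩ s) = s := by
            ext z
            simp only [Set.mem_iUnion]
            constructor
            · rintro ⟨i, _, hz⟩; exact hz
            · intro hz; exact ⟨q z, rfl, hz⟩
          rw [← tsum_fintype (L := SummationFilter.unconditional _), ← measure_iUnion hdisj fun i => (hAm i).inter hs, hcover]
  have hbind : μ.bind (fun ω => B (Enc (X ω))) = PZ := by
    rw [← hPZbind, ← hFdist]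
    ext s hs
    have h1 : Measurable fun z => (B (q z)) s := (Measure.measurable_coe hs).comp hBq
    have h2 : Measurable fun ω => Fstar (X ω) := hFm.comp hX
    rw [Measure.bind_apply hs hBE.aemeasurable, Measure.bind_apply hs hBq.aemeasurable, lintegral_map h1 h2]
  refine ⟨Enc, B, hBprob, ?_, ?_⟩
  · -- second marginal is PZ
    rw [← hbind]
    ext s hs
    rw [Measure.map_apply measurable_snd hs,
      Measure.bind_apply (measurable_snd hs) hfmeas.aemeasurable, Measure.bind_apply hs hBE.aemeasurable]
    refine lintegral_congr fun ω => ?_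
    rw [hf]
    dsimp only
    rw [Measure.map_apply measurable_prodMk_left (measurable_snd hs)]
    rfl
  · -- cost bound
    have hFX : Measurable fun ω => Fstar (X ω) := hFm.comp hX
    -- measurability of the quantization error, via indicator sums over the cells
    have hdm : Measurable fun z => ‖z - cc (q z)‖ := by
      have hrepr : (fun z => ‖z - cc (q z)‖)
          = fun z => ∑ i, (A i).indicator (fun w => ‖w - cc i‖) z := by
        funext z
        rw [Finset.sum_eq_single (q z)]
        · rw [Set.indicator_of_mem (by exact rfl : z ∈ A (q z))]
        · intro i _ hi
          refine Set.indicator_of_notMem ?_ _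
          intro hzi
          exact hi ((Set.mem_singleton_iff.1 hzi).symm)
        · intro h; exact absurd (Finset.mem_univ _) h
      rw [hrepr]
      exact Finset.measurable_sum _ fun i _ =>
        ((continuous_id.sub continuous_const).norm.measurable).indicator (hAm i)
    have herr : Measurable fun z => ENNReal.ofReal (K * ‖z - cc (q z)‖) :=
      (hdm.const_mul K).ennreal_ofReal
    have hn : Measurable fun ω => ENNReal.ofReal ‖Fstar (X ω) - cc (q (Fstar (X ω)))‖ :=
      (hdm.comp hFX).ennreal_ofReal
    -- the conditional measures live on their own cells
    have hsup : ∀ i, ∀ᵐ z ∂(B i), ‖cc i - z‖ ≤ ‖z - cc (q z)‖ := by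
      intro i
      have hms : MeasurableSet {z : V | ‖cc i - z‖ ≤ ‖z - cc (q z)‖} :=
        measurableSet_le ((continuous_const.sub continuous_id).norm.measurable) hdm
      rw [hB]
      dsimp only
      split_ifs with h0
      · rw [MeasureTheory.ae_dirac_iff hms]
        simp
      · unfold ProbabilityTheory.cond
        refine Measure.ae_smul_measure ?_ _
        filter_upwards [ae_restrict_mem (hAm i)] with z hz
        have hzq : q z = i := hz
        rw [← hzq, norm_sub_rev]
    have hinner : ∀ ω, ∫⁻ z, edist (X ω) (G z) ∂(B (Enc (X ω)))
        ≤ ENNReal.ofReal (K * ‖Fstar (X ω) - cc (q (Fstar (X ω)))‖)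
          + ∫⁻ z, ENNReal.ofReal (K * ‖z - cc (q z)‖) ∂(B (Enc (X ω)))
          + edist (X ω) (G (Fstar (X ω))) := by
      intro ω
      have := hBprob (Enc (X ω))
      calc ∫⁻ z, edist (X ω) (G z) ∂(B (Enc (X ω)))
          ≤ ∫⁻ z, (ENNReal.ofReal (K * ‖Fstar (X ω) - cc (q (Fstar (X ω)))‖)
              + ENNReal.ofReal (K * ‖z - cc (q z)‖)
              + edist (X ω) (G (Fstar (X ω)))) ∂(B (Enc (X ω))) := by
            refine lintegral_mono_ae ?_
            filter_upwards [hsup (Enc (X ω))] with z hz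
            have hkey : edist (G (Fstar (X ω))) (G z)
                ≤ ENNReal.ofReal (K * ‖Fstar (X ω) - cc (q (Fstar (X ω)))‖)
                  + ENNReal.ofReal (K * ‖z - cc (q z)‖) := by
              rw [edist_dist]
              calc ENNReal.ofReal (dist (G (Fstar (X ω))) (G z))
                  ≤ ENNReal.ofReal (K * ‖Fstar (X ω) - z‖) :=
                    ENNReal.ofReal_le_ofReal (hG _ _)
                _ ≤ ENNReal.ofReal (K * ‖Fstar (X ω) - cc (q (Fstar (X ω)))‖
                      + K * ‖z - cc (q z)‖) := by
                    refine ENNReal.ofReal_le_ofReal ?_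
                    rw [← mul_add]
                    refine mul_le_mul_of_nonneg_left ?_ hK
                    have hsplit : Fstar (X ω) - z
                        = (Fstar (X ω) - cc (Enc (X ω))) + (cc (Enc (X ω)) - z) := by abel
                    rw [hsplit]
                    exact (norm_add_le _ _).trans (add_le_add le_rfl hz)
                _ ≤ _ := ENNReal.ofReal_add_le
            calc edist (X ω) (G z)
                ≤ edist (X ω) (G (Fstar (X ω))) + edist (G (Fstar (X ω))) (G z) :=
                  edist_triangle _ _ _
              _ ≤ edist (X ω) (G (Fstar (X ω)))
                    + (ENNReal.ofReal (K * ‖Fstar (X ω) - cc (q (Fstar (X ω)))‖)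
                      + ENNReal.ofReal (K * ‖z - cc (q z)‖)) := add_le_add le_rfl hkey
              _ = _ := by ring
        _ = _ := by
            rw [lintegral_add_right _ measurable_const, lintegral_add_left measurable_const,
              lintegral_const, lintegral_const, measure_univ, mul_one, mul_one]
    -- the common quantization-error bound
    have hT2 : ∫⁻ ω, ENNReal.ofReal (K * ‖Fstar (X ω) - cc (q (Fstar (X ω)))‖) ∂μ
        ≤ ENNReal.ofReal (K * ε) := by
      calc ∫⁻ ω, ENNReal.ofReal (K * ‖Fstar (X ω) - cc (q (Fstar (X ω)))‖) ∂μ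
          = ENNReal.ofReal K
              * ∫⁻ ω, ENNReal.ofReal ‖Fstar (X ω) - cc (q (Fstar (X ω)))‖ ∂μ := by
            simp_rw [ENNReal.ofReal_mul hK]
            rw [lintegral_const_mul _ hn]
        _ ≤ ENNReal.ofReal K * ENNReal.ofReal ε := by gcongr
        _ = ENNReal.ofReal (K * ε) := (ENNReal.ofReal_mul hK).symm
    have h2m : Measurable fun ω => ENNReal.ofReal (K * ‖Fstar (X ω) - cc (q (Fstar (X ω)))‖) :=
      ((hdm.comp hFX).const_mul K).ennreal_ofReal
    have h3m : Measurable fun ω => ∫⁻ z, ENNReal.ofReal (K * ‖z - cc (q z)‖) ∂(B (Enc (X ω))) :=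
      (Measurable.of_discrete
        (f := fun i => ∫⁻ z, ENNReal.ofReal (K * ‖z - cc (q z)‖) ∂(B i))).comp hEX
    calc ∫⁻ p, edist p.1 (G p.2) ∂(μ.bind f)
        ≤ ∫⁻ ω, ∫⁻ z, edist (X ω) (G z) ∂(B (Enc (X ω))) ∂μ := by
          rw [MeasureTheory.lintegral]
          refine iSup₂_le fun φ hφ => ?_
          rw [← SimpleFunc.lintegral_eq_lintegral, Measure.lintegral_bind hfmeas.aemeasurable φ.measurable.aemeasurable]
          refine lintegral_mono fun ω => ?_
          rw [hf]
          dsimp only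
          rw [lintegral_map φ.measurable measurable_prodMk_left]
          exact lintegral_mono fun z => hφ _
      _ ≤ ∫⁻ ω, (ENNReal.ofReal (K * ‖Fstar (X ω) - cc (q (Fstar (X ω)))‖)
            + ∫⁻ z, ENNReal.ofReal (K * ‖z - cc (q z)‖) ∂(B (Enc (X ω)))
            + edist (X ω) (G (Fstar (X ω)))) ∂μ := lintegral_mono hinner
      _ = ∫⁻ ω, ENNReal.ofReal (K * ‖Fstar (X ω) - cc (q (Fstar (X ω)))‖) ∂μ
            + ∫⁻ ω, ∫⁻ z, ENNReal.ofReal (K * ‖z - cc (q z)‖) ∂(B (Enc (X ω))) ∂μ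
            + ∫⁻ ω, edist (X ω) (G (Fstar (X ω))) ∂μ := by
          rw [lintegral_add_left (f := fun ω => ENNReal.ofReal (K * ‖Fstar (X ω) - cc (q (Fstar (X ω)))‖) + ∫⁻ z, ENNReal.ofReal (K * ‖z - cc (q z)‖) ∂(B (Enc (X ω)))) (h2m.add h3m), lintegral_add_left h2m]
      _ ≤ ENNReal.ofReal (K * ε) + ENNReal.ofReal (K * ε)
            + Wd (fun x y => edist x y) (μ.map X) (PZ.map G) := by
          refine add_le_add (add_le_add hT2 ?_) (le_of_eq hFopt)
          have h3 : ∫⁻ ω, ∫⁻ z, ENNReal.ofReal (K * ‖z - cc (q z)‖) ∂(B (Enc (X ω))) ∂μ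
              = ∫⁻ z, ENNReal.ofReal (K * ‖z - cc (q z)‖) ∂PZ := by
            rw [← hbind, Measure.lintegral_bind hBE.aemeasurable herr.aemeasurable]
          rw [h3, ← hFdist, lintegral_map herr hFX]
          exact hT2
      _ = Wd (fun x y => edist x y) (μ.map X) (PZ.map G)
            + ENNReal.ofReal (2 * K * ε) := by
          rw [← ENNReal.ofReal_add (mul_nonneg hK hε) (mul_nonneg hK hε), add_comm]
          congr 2
          ring
end

section
/- Let (X, d) be a metric space, P_X and P_Z probability measures, and G : Z → X measurable with Z ~ P_Z. Then inf over joint distributions Π of (X, G(Z)) with marginals P_X and P_{G(Z)} of E_Π[c(X, G(Z))] equals inf over conditional distributions Q(Z|X) whose Z-marginal equals P_Z of E_X E_{Q(Z|X)}[c(X, G(Z))]. -/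
open MeasureTheory ENNReal

open ProbabilityTheory

lemma snd_compProd' {α β : Type*} [MeasurableSpace α] [MeasurableSpace β]
    (μ : Measure α) [SFinite μ] (κ : Kernel α β) [IsSFiniteKernel κ] :
    (μ ⊗ₘ κ).map Prod.snd = μ.bind (fun x => κ x) := by
  ext s hs
  rw [Measure.map_apply measurable_snd hs,
    Measure.compProd_apply (measurable_snd hs),
    Measure.bind_apply hs (Kernel.measurable κ).aemeasurable]
  rfl

/-- WAE identity: the infimum of `E[c(X, G(Z))]` over couplings of `P_X` and `P_{G(Z)}`
equals the infimum over conditional distributions `Q(Z|X)` (Markov kernels) whose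
`Z`-marginal is `P_Z`. -/
theorem stmt12 {𝒳 𝒵 : Type*} [MeasurableSpace 𝒳] [StandardBorelSpace 𝒳]
    [MeasurableSpace 𝒵] [StandardBorelSpace 𝒵] [Nonempty 𝒵]
    (c : 𝒳 → 𝒳 → ℝ≥0∞) (hc : Measurable fun p : 𝒳 × 𝒳 => c p.1 p.2)
    (G : 𝒵 → 𝒳) (hG : Measurable G)
    (P : Measure 𝒳) [IsProbabilityMeasure P]
    (PZ : Measure 𝒵) [IsProbabilityMeasure PZ] :
    Wd c P (PZ.map G)
      = ⨅ κ ∈ {κ : Kernel 𝒳 𝒵 | IsMarkovKernel κ ∧ P.bind (fun x => κ x) = PZ},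
          ∫⁻ x, ∫⁻ z, c x (G z) ∂(κ x) ∂P := by
  have hc' : Measurable fun q : 𝒳 × 𝒵 => c q.1 (G q.2) :=
    hc.comp (measurable_fst.prodMk (hG.comp measurable_snd))
  rw [Wd]
  apply le_antisymm
  · -- couplings inf ≤ kernels inf
    refine le_iInf₂ fun κ hκ => ?_
    obtain ⟨hM, hbind⟩ := hκ
    haveI := hM
    refine iInf₂_le_of_le ((P ⊗ₘ κ).map (Prod.map id G)) ⟨?_, ?_⟩ ?_
    · rw [Measure.map_map measurable_fst (measurable_id.prodMap hG)]
      have h1 : (Prod.fst ∘ Prod.map id G : 𝒳 × 𝒵 → 𝒳) = Prod.fst := rfl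
      rw [h1]
      exact Measure.fst_compProd P κ
    · rw [Measure.map_map measurable_snd (measurable_id.prodMap hG)]
      have h1 : (Prod.snd ∘ Prod.map id G : 𝒳 × 𝒵 → 𝒳) = G ∘ Prod.snd := rfl
      rw [h1, ← Measure.map_map hG measurable_snd, snd_compProd' P κ, hbind]
    · rw [lintegral_map hc (measurable_id.prodMap hG)]
      simp only [Prod.map_fst, Prod.map_snd, id_eq]
      rw [Measure.lintegral_compProd hc']
  · -- kernels inf ≤ couplings inf
    refine le_iInf₂ fun π hπ => ?_
    obtain ⟨hfst, hsnd⟩ := hπ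
    haveI : IsProbabilityMeasure π := by
      constructor
      have h := congrArg (fun m : Measure 𝒳 => m Set.univ) hfst
      simpa [Measure.map_apply measurable_fst MeasurableSet.univ] using h
    letI := upgradeStandardBorel 𝒳
    set ρ : Measure (𝒳 × 𝒵) := PZ.map (fun z => (G z, z)) with hρ
    have hmeasGz : Measurable fun z : 𝒵 => (G z, z) := hG.prodMk measurable_id
    haveI : IsProbabilityMeasure ρ := Measure.isProbabilityMeasure_map hmeasGz.aemeasurable
    have hρfst : ρ.fst = PZ.map G := by
      rw [Measure.fst, hρ, Measure.map_map measurable_fst hmeasGz]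
      rfl
    set ν := ρ.condKernel with hν
    haveI : IsMarkovKernel ν := by rw [hν]; infer_instance
    set η : Kernel (𝒳 × 𝒳) (𝒳 × 𝒵) :=
      (Kernel.deterministic Prod.fst measurable_fst) ×ₖ (ν.comap Prod.snd measurable_snd)
      with hη
    haveI : IsMarkovKernel η := by rw [hη]; infer_instance
    have hηapp : ∀ p : 𝒳 × 𝒳, η p = ((ν p.2).map (Prod.mk p.1)) := by
      intro p
      rw [hη, Kernel.prod_apply, Kernel.deterministic_apply, Kernel.comap_apply,
        Measure.dirac_prod]
    set μ : Measure (𝒳 × 𝒵) := π.bind (fun p => η p) with hμ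
    have hμapp : ∀ {s : Set (𝒳 × 𝒵)}, MeasurableSet s →
        μ s = ∫⁻ p, η p s ∂π := fun hs =>
      Measure.bind_apply hs (Kernel.measurable η).aemeasurable
    haveI : IsProbabilityMeasure μ := by
      constructor
      rw [hμapp MeasurableSet.univ]
      simp
    -- first marginal of μ is P
    have hμfst : μ.fst = P := by
      ext s hs
      have hval : ∀ p : 𝒳 × 𝒳, η p (Prod.fst ⁻¹' s) =
          s.indicator (fun _ => (1 : ℝ≥0∞)) p.1 := by
        intro p
        rw [hηapp p, Measure.map_apply measurable_prodMk_left (measurable_fst hs)]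
        by_cases hp : p.1 ∈ s
        · have h1 : (Prod.mk p.1 ⁻¹' (Prod.fst ⁻¹' s) : Set 𝒵) = Set.univ := by
            ext z; simp [hp]
          simp [h1, hp]
        · have h1 : (Prod.mk p.1 ⁻¹' (Prod.fst ⁻¹' s) : Set 𝒵) = ∅ := by
            ext z; simp [hp]
          simp [h1, hp]
      rw [Measure.fst_apply hs, hμapp (measurable_fst hs)]
      simp_rw [hval]
      refine Eq.trans (lintegral_map (measurable_const.indicator hs) measurable_fst).symm ?_
      rw [hfst, lintegral_indicator hs]
      simp
    -- second marginal of μ is PZ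
    have hμsnd : μ.map Prod.snd = PZ := by
      ext s hs
      have hval : ∀ p : 𝒳 × 𝒳, η p (Prod.snd ⁻¹' s) = ν p.2 s := by
        intro p
        rw [hηapp p, Measure.map_apply measurable_prodMk_left (measurable_snd hs)]
        congr 1
      rw [Measure.map_apply measurable_snd hs, hμapp (measurable_snd hs)]
      simp_rw [hval]
      refine Eq.trans (lintegral_map (Kernel.measurable_coe ν hs) measurable_snd).symm ?_
      rw [hsnd, ← hρfst]
      have h1 : ∫⁻ y, ν y s ∂ρ.fst = (ρ.fst ⊗ₘ ν) (Prod.snd ⁻¹' s) := by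
        rw [Measure.compProd_apply (measurable_snd hs)]
        refine lintegral_congr fun y => ?_
        congr 1
      rw [h1, hν, ρ.disintegrate ρ.condKernel, hρ,
        Measure.map_apply hmeasGz (measurable_snd hs)]
      congr 1
    -- the graph set
    set S : Set (𝒳 × 𝒵) := {q | G q.2 = q.1} with hS
    have hSm : MeasurableSet S :=
      MeasureTheory.StronglyMeasurable.measurableSet_eq_fun
        (hG.comp measurable_snd).stronglyMeasurable measurable_fst.stronglyMeasurable
    have hρS : ρ S = 1 := by
      rw [hρ, Measure.map_apply hmeasGz hSm]
      have : (fun z : 𝒵 => (G z, z)) ⁻¹' S = Set.univ := by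
        ext z; simp [hS]
      rw [this]; simp
    -- a.e. y, ν y is concentrated on the fiber
    have hfmeas : Measurable fun y : 𝒳 => ν y (Prod.mk y ⁻¹' S) :=
      Kernel.measurable_kernel_prodMk_left hSm
    have hfint : ∫⁻ y, ν y (Prod.mk y ⁻¹' S) ∂ρ.fst = 1 := by
      rw [← Measure.compProd_apply hSm, hν, ρ.disintegrate ρ.condKernel, hρS]
    have hae1 : ∀ᵐ y ∂ρ.fst, ν y (Prod.mk y ⁻¹' S) = 1 := by
      have hle : ∀ y, ν y (Prod.mk y ⁻¹' S) ≤ 1 := fun y => prob_le_one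
      have h0 : ∫⁻ y, 1 - ν y (Prod.mk y ⁻¹' S) ∂ρ.fst = 0 := by
        rw [lintegral_sub hfmeas (by rw [hfint]; exact one_ne_top) (ae_of_all _ hle)]
        rw [hfint]
        simp
      have h2 := (lintegral_eq_zero_iff (measurable_const.sub hfmeas)).mp h0
      filter_upwards [h2] with y hy
      exact le_antisymm (hle y) (tsub_eq_zero_iff_le.mp hy)
    have haeπ : ∀ᵐ p ∂π, ν p.2 (Prod.mk p.2 ⁻¹' S) = 1 := by
      rw [hρfst, ← hsnd] at hae1
      exact (ae_map_iff measurable_snd.aemeasurable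
        (hfmeas (measurableSet_singleton 1))).mp hae1
    -- integral identity
    have hint : ∫⁻ q, c q.1 (G q.2) ∂μ = ∫⁻ p, c p.1 p.2 ∂π := by
      rw [hμ, Measure.lintegral_bind (Kernel.measurable η).aemeasurable hc'.aemeasurable]
      refine lintegral_congr_ae ?_
      filter_upwards [haeπ] with p hp
      rw [hηapp p, lintegral_map hc' measurable_prodMk_left]
      have haez : ∀ᵐ z ∂ν p.2, G z = p.2 := by
        rw [ae_iff]
        have hcs : {z | ¬ G z = p.2} = (Prod.mk p.2 ⁻¹' S)ᶜ := by
          ext z; simp [hS]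
        rw [hcs, measure_compl (measurable_prodMk_left hSm) (measure_ne_top _ _), hp]
        simp
      calc ∫⁻ z, c p.1 (G z) ∂ν p.2 = ∫⁻ z, c p.1 p.2 ∂ν p.2 :=
            lintegral_congr_ae (haez.mono fun z hz => by simp only [hz])
        _ = c p.1 p.2 := by simp
    refine iInf₂_le_of_le μ.condKernel ⟨inferInstance, ?_⟩ ?_
    · rw [← hμfst, ← snd_compProd' μ.fst μ.condKernel, μ.disintegrate μ.condKernel, hμsnd]
    · have h3 : ∫⁻ x, ∫⁻ z, c x (G z) ∂μ.condKernel x ∂P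
          = ∫⁻ q, c q.1 (G q.2) ∂μ := by
        conv_rhs => rw [← μ.disintegrate μ.condKernel]
        rw [Measure.lintegral_compProd hc', hμfst]
      rw [h3, hint]
end

section
/- Let Z be a random vector in ℝ^m with E[‖Z‖^{1+δ}] < ∞ for some δ > 0. Then for every R large enough there exist 2^R centers c₁,…,c_{2^R} ∈ ℝ^m such that E[min_i ‖Z − c_i‖] ≤ 2^{−R/m}(C₁ E[‖Z‖^{1+δ}] + C₂), where C₁, C₂ > 0 depend only on δ, m, and the norm ‖·‖. -/
set_option maxHeartbeats 1000000
open Finset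

/-- 1D grid point: any `t ∈ [0,2r]` is within `r/n` of some point `(2i+1)r/n`, `i < n`. -/
lemma one_dim_grid (r : ℝ) (hr : 0 < r) (n : ℕ) (hn : 0 < n) (t : ℝ) (ht0 : 0 ≤ t)
    (ht : t ≤ 2 * r) : ∃ i : Fin n, |t - (2 * (i : ℝ) + 1) * r / n| ≤ r / n := by
  have hn' : (0:ℝ) < n := by exact_mod_cast hn
  set j : ℕ := min (⌊t * n / (2 * r)⌋₊) (n - 1) with hj
  refine ⟨⟨j, by omega⟩, ?_⟩
  have hjf : (j : ℝ) ≤ t * n / (2 * r) := by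
    calc (j:ℝ) ≤ (⌊t * n / (2 * r)⌋₊ : ℝ) := by exact_mod_cast Nat.min_le_left _ _
    _ ≤ t * n / (2 * r) := Nat.floor_le (by positivity)
  have hlow : 2 * (j:ℝ) * r ≤ t * n := by
    rw [le_div_iff₀ (by positivity)] at hjf; nlinarith
  have hupp : t * n ≤ 2 * ((j:ℝ) + 1) * r := by
    rcases le_or_gt (⌊t * n / (2 * r)⌋₊) (n-1) with h | h
    · have hje : j = ⌊t * n / (2 * r)⌋₊ := by omega
      have h2 := Nat.lt_floor_add_one (t * n / (2 * r))
      rw [← hje, div_lt_iff₀ (by positivity)] at h2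
      nlinarith
    · have hje : j = n - 1 := by omega
      have hjn : ((j:ℝ) + 1) = n := by
        rw [hje]; have h1 : (1:ℕ) ≤ n := hn; push_cast [Nat.cast_sub h1]; ring
      nlinarith [hjn]
  have key : |t * n - (2 * (j:ℝ) + 1) * r| ≤ r := by
    rw [abs_le]; constructor <;> nlinarith
  calc |t - (2 * (j:ℝ) + 1) * r / n| = |t * n - (2 * (j:ℝ) + 1) * r| / n := by
        rw [← abs_of_pos hn', ← abs_div]; congr 1; field_simp; rw [abs_of_pos hn']; ring
    _ ≤ r / n := by gcongr

/-- Grid cover of the sup-norm ball of radius `r` in `Fin m → ℝ` by `n^m` points of mesh `r/n`. -/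
lemma grid_cover (m n : ℕ) (hn : 0 < n) (r : ℝ) (hr : 0 < r) :
    ∃ g : (Fin m → Fin n) → (Fin m → ℝ),
      ∀ w : Fin m → ℝ, ‖w‖ ≤ r → ∃ f, ‖w - g f‖ ≤ r / n := by
  refine ⟨fun f j => (2 * ((f j : ℕ) : ℝ) + 1) * r / n - r, fun w hw => ?_⟩
  have hn' : (0:ℝ) < n := by exact_mod_cast hn
  have hco : ∀ j : Fin m, ∃ i : Fin n,
      |(w j + r) - (2 * (i : ℝ) + 1) * r / n| ≤ r / n := by
    intro j
    have h1 : |w j| ≤ r := (norm_le_pi_norm w j).trans hw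
    rw [abs_le] at h1
    exact one_dim_grid r hr n hn (w j + r) (by linarith) (by linarith)
  choose f hf using hco
  refine ⟨f, ?_⟩
  rw [pi_norm_le_iff_of_nonneg (by positivity)]
  intro j
  have := hf j
  rw [Real.norm_eq_abs]
  have h2 : (w - fun j => (2 * ((f j : ℕ) : ℝ) + 1) * r / n - r) j
      = (w j + r) - (2 * ((f j : ℕ) : ℝ) + 1) * r / n := by
    simp only [Pi.sub_apply]; ring
  rw [h2]
  exact this

/-- Quantitative ball covering in a finite-dimensional normed space. -/
lemma ball_cover (V : Type*) [NormedAddCommGroup V] [NormedSpace ℝ V]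
    [FiniteDimensional ℝ V] :
    ∃ C : ℝ, 1 ≤ C ∧ ∀ r : ℝ, 0 < r → ∀ n : ℕ, 0 < n →
      ∃ s : Finset V, s.card ≤ n ^ (Module.finrank ℝ V) ∧
        ∀ z : V, ‖z‖ ≤ r → ∃ c ∈ s, ‖z - c‖ ≤ C * r / n := by
  classical
  set m := Module.finrank ℝ V
  let e : V ≃L[ℝ] (Fin m → ℝ) :=
    (Module.finBasis ℝ V).equivFun.toContinuousLinearEquiv
  obtain ⟨K, hK1, hKe⟩ : ∃ K : ℝ, 1 ≤ K ∧ (∀ v : V, ‖e v‖ ≤ K * ‖v‖) ∧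
      ∀ w : Fin m → ℝ, ‖e.symm w‖ ≤ K * ‖w‖ := by
    refine ⟨max 1 (max ‖(e : V →L[ℝ] (Fin m → ℝ))‖ ‖(e.symm : (Fin m → ℝ) →L[ℝ] V)‖),
      le_max_left _ _, fun v => ?_, fun w => ?_⟩
    · exact ((e : V →L[ℝ] (Fin m → ℝ)).le_opNorm v).trans (by
        apply mul_le_mul_of_nonneg_right _ (norm_nonneg v)
        exact le_max_of_le_right (le_max_left _ _))
    · exact ((e.symm : (Fin m → ℝ) →L[ℝ] V).le_opNorm w).trans (by
        apply mul_le_mul_of_nonneg_right _ (norm_nonneg w)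
        exact le_max_of_le_right (le_max_right _ _))
  obtain ⟨hKe, hKs⟩ := hKe
  refine ⟨K * K, by nlinarith, ?_⟩
  intro r hr n hn
  obtain ⟨g, hg⟩ := grid_cover m n hn (K * r) (by positivity)
  refine ⟨Finset.image (fun f => e.symm (g f)) Finset.univ, ?_, ?_⟩
  · calc (Finset.image (fun f => e.symm (g f)) Finset.univ).card
        ≤ (Finset.univ : Finset (Fin m → Fin n)).card := Finset.card_image_le
    _ = n ^ m := by simp [Fintype.card_fun]
  · intro z hz
    obtain ⟨f, hf⟩ := hg (e z) ((hKe z).trans (by nlinarith))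
    refine ⟨e.symm (g f), Finset.mem_image_of_mem _ (Finset.mem_univ f), ?_⟩
    have : z - e.symm (g f) = e.symm (e z - g f) := by
      simp [map_sub]
    rw [this]
    calc ‖e.symm (e z - g f)‖ ≤ K * ‖e z - g f‖ := hKs _
    _ ≤ K * (K * r / n) := by
        apply mul_le_mul_of_nonneg_left hf (by linarith)
    _ = K * K * r / n := by ring

open MeasureTheory ENNReal

/-- High-resolution vector quantization bound (Graf–Luschgy): for a random vector `Z` in an
`m`-dimensional normed space with `E[‖Z‖^{1+δ}] < ∞`, and for all sufficiently large `R`,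
there exist `2^R` centers with expected nearest-neighbor quantization error at most
`2^{−R/m}(C₁ E[‖Z‖^{1+δ}] + C₂)`, where `C₁, C₂ > 0` depend only on `δ`, `m` and the norm. -/
theorem stmt16 {V : Type*} [NormedAddCommGroup V] [NormedSpace ℝ V]
    [FiniteDimensional ℝ V] [MeasurableSpace V] [BorelSpace V]
    (hm : 0 < Module.finrank ℝ V) (δ : ℝ) (hδ : 0 < δ) :
    ∃ C₁ C₂ : ℝ, 0 < C₁ ∧ 0 < C₂ ∧
      ∀ P : Measure V, IsProbabilityMeasure P →
        (∫⁻ z, ENNReal.ofReal (‖z‖ ^ (1 + δ)) ∂P) ≠ ⊤ →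
        ∃ R₀ : ℕ, ∀ R : ℕ, R₀ ≤ R →
          ∃ c : Fin (2 ^ R) → V,
            ∫⁻ z, ⨅ i, ENNReal.ofReal ‖z - c i‖ ∂P
              ≤ ENNReal.ofReal ((2 : ℝ) ^ (-(R : ℝ) / (Module.finrank ℝ V : ℝ)) *
                  (C₁ * (∫⁻ z, ENNReal.ofReal (‖z‖ ^ (1 + δ)) ∂P).toReal + C₂)) := by
  classical
  obtain ⟨C, hC1, hcov⟩ := ball_cover V
  set m := Module.finrank ℝ V with hmdef
  have hm1 : 1 ≤ m := hm
  have hm1' : (1:ℝ) ≤ m := by exact_mod_cast hm1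
  -- the annulus scale
  set a : ℕ := ⌈2 / δ⌉₊ with ha
  have ha1 : 1 ≤ a := Nat.one_le_iff_ne_zero.2 (by
    have : 0 < a := Nat.ceil_pos.2 (by positivity); omega)
  have haδ : 2 ≤ (a:ℝ) * δ := by
    have h : 2 / δ ≤ (a:ℝ) := by exact_mod_cast Nat.le_ceil (2 / δ)
    calc (2:ℝ) = (2/δ) * δ := by field_simp
    _ ≤ (a:ℝ) * δ := mul_le_mul_of_nonneg_right h hδ.le
  have ha0 : (0:ℝ) < a := by exact_mod_cast ha1
  set E : ℝ := 8 * C * 2 ^ a + 1 with hE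
  have hCpos : 0 < C := lt_of_lt_of_le one_pos hC1
  have hEpos : 0 < E := by positivity
  refine ⟨E, E, hEpos, hEpos, ?_⟩
  intro P hP hM
  refine ⟨2 * m + 4, ?_⟩
  intro R hR
  set Q : ℕ := R / m - 2 with hQ
  have hRm2 : 2 ≤ R / m := (Nat.le_div_iff_mul_le hm).2 (by omega)
  have hQcast : (R:ℝ)/m - 3 ≤ (Q:ℝ) := by
    have h1 : R < m * (R / m) + m := by
      have := Nat.div_add_mod R m
      have := Nat.mod_lt R hm
      omega
    have h2 : (R:ℝ) < m * ((R/m : ℕ):ℝ) + m := by exact_mod_cast h1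
    have h3 : (Q:ℝ) = ((R/m : ℕ):ℝ) - 2 := by
      rw [hQ]; push_cast [Nat.cast_sub hRm2]; ring
    rw [h3]
    rw [div_sub' (by positivity), div_le_iff₀ (by positivity : (0:ℝ) < (m:ℝ))]
    nlinarith
  -- the covering sets
  set rk : ℕ → ℝ := fun k => (2:ℝ) ^ (a * (k + 1)) with hrk
  set nk : ℕ → ℕ := fun k => 2 ^ (Q - k) with hnk
  have hrkpos : ∀ k, 0 < rk k := fun k => by positivity
  have hnkpos : ∀ k, 0 < nk k := fun k => by positivity
  choose sk hskcard hskcov using fun k => hcov (rk k) (hrkpos k) (nk k) (hnkpos k)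
  set S : Finset V := insert 0 ((Finset.range (R+1)).biUnion sk) with hS
  have h0S : (0:V) ∈ S := Finset.mem_insert_self _ _
  -- cardinality bound
  have hcard : S.card ≤ 2 ^ R := by
    have haux : ∀ n : ℕ, n + 8 ≤ 2 ^ (n + 3) := by
      intro n
      induction n with
      | zero => norm_num
      | succ p ih =>
          have h2 : (2:ℕ) ^ (p+1+3) = 2 ^ (p+3) * 2 := by
            rw [show p+1+3 = (p+3)+1 from rfl, pow_succ]
          omega
    have hmQ : m * Q + 2 ≤ R := by
      have h1 : R / m * m ≤ R := Nat.div_mul_le_self R m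
      have h2 : R / m = Q + 2 := by omega
      rw [h2, Nat.add_mul] at h1
      have : m * Q = Q * m := Nat.mul_comm m Q
      omega
    have hterm : ∀ k : ℕ, ((nk k : ℕ):ℝ) ^ m ≤ (2:ℝ) ^ (m*Q) * (1/2) ^ k + 1 := by
      intro k
      have : ((nk k : ℕ):ℝ) ^ m = (2:ℝ) ^ ((Q - k) * m) := by
        simp only [hnk]; push_cast; rw [← pow_mul]
      rw [this]
      rcases le_or_gt k Q with h | h
      · have hexp : (Q - k) * m + k ≤ m * Q := by
          have h3 : k ≤ m * k := Nat.le_mul_of_pos_left k hm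
          have h4 : (Q - k) * m = m * Q - m * k := by
            rw [Nat.sub_mul, Nat.mul_comm Q m, Nat.mul_comm k m]
          have h5 : m * k ≤ m * Q := Nat.mul_le_mul_left m h
          omega
        have := pow_le_pow_right₀ (one_le_two (α := ℝ)) hexp
        rw [pow_add] at this
        have h6 : (2:ℝ) ^ ((Q-k)*m) ≤ (2:ℝ)^(m*Q) / 2^k := by
          rw [le_div_iff₀ (by positivity)]; exact this
        calc (2:ℝ) ^ ((Q-k)*m) ≤ (2:ℝ)^(m*Q) / 2^k := h6
        _ = (2:ℝ)^(m*Q) * (1/2)^k := by rw [div_pow, one_pow]; ring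
        _ ≤ _ := by linarith
      · have : Q - k = 0 := by omega
        rw [this]
        have : (0:ℝ) ≤ (2:ℝ)^(m*Q) * (1/2)^k := by positivity
        simp only [Nat.zero_mul, pow_zero]
        linarith
    have hcardN : (S.card : ℝ) ≤ 1 + ∑ k ∈ Finset.range (R+1), ((nk k : ℕ):ℝ) ^ m := by
      have h1 : S.card ≤ 1 + ∑ k ∈ Finset.range (R+1), (nk k) ^ m := by
        calc S.card ≤ ((Finset.range (R+1)).biUnion sk).card + 1 := Finset.card_insert_le _ _
        _ ≤ (∑ k ∈ Finset.range (R+1), (sk k).card) + 1 := by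
            exact Nat.add_le_add_right (Finset.card_biUnion_le) 1
        _ ≤ (∑ k ∈ Finset.range (R+1), (nk k) ^ m) + 1 := by
            exact Nat.add_le_add_right (Finset.sum_le_sum fun k _ => hskcard k) 1
        _ = 1 + ∑ k ∈ Finset.range (R+1), (nk k) ^ m := by omega
      exact_mod_cast h1
    have hsum : ∑ k ∈ Finset.range (R+1), ((nk k : ℕ):ℝ) ^ m
        ≤ (2:ℝ)^(m*Q) * 2 + (R+1) := by
      calc ∑ k ∈ Finset.range (R+1), ((nk k : ℕ):ℝ) ^ m
          ≤ ∑ k ∈ Finset.range (R+1), ((2:ℝ)^(m*Q) * (1/2)^k + 1) :=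
            Finset.sum_le_sum fun k _ => hterm k
        _ = (2:ℝ)^(m*Q) * (∑ k ∈ Finset.range (R+1), (1/2:ℝ)^k) + (R+1) := by
            rw [Finset.sum_add_distrib, ← Finset.mul_sum]
            simp
        _ ≤ (2:ℝ)^(m*Q) * 2 + (R+1) := by
            have := sum_geometric_two_le (R+1)
            have h2 : (0:ℝ) ≤ (2:ℝ)^(m*Q) := by positivity
            nlinarith
    have hfin : (S.card : ℝ) ≤ ((2:ℕ) ^ R : ℕ) := by
      push_cast
      have h7 : (2:ℝ)^(m*Q) * 2 = (2:ℝ)^(m*Q+1) := by ring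
      have h8 : (2:ℝ)^(m*Q+1) ≤ (2:ℝ)^(R-1) :=
        pow_le_pow_right₀ one_le_two (by omega)
      have h9 : ((R:ℝ)+2) ≤ (2:ℝ)^(R-1) := by
        have := haux (R - 4)
        have h10 : R - 4 + 8 = R + 4 := by omega
        have h11 : R - 4 + 3 = R - 1 := by omega
        rw [h10, h11] at this
        have : ((R + 4 : ℕ):ℝ) ≤ ((2:ℕ)^(R-1) : ℕ) := by exact_mod_cast this
        push_cast at this
        linarith
      have h12 : (2:ℝ)^(R-1) + (2:ℝ)^(R-1) = (2:ℝ)^R := by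
        have hR1 : R = (R-1) + 1 := by omega
        rw [hR1, pow_succ]
        have hR2 : R - 1 + 1 - 1 = R - 1 := by omega
        rw [hR2]; ring
      nlinarith [hcardN, hsum]
    exact_mod_cast hfin
  -- enumeration of S
  have hlen : S.toList.length = S.card := S.length_toList
  set c : Fin (2^R) → V := fun i =>
    if h : (i:ℕ) < S.toList.length then S.toList.get ⟨i, h⟩ else 0 with hc
  have hmemc : ∀ v ∈ S, ∃ i : Fin (2^R), c i = v := by
    intro v hv
    obtain ⟨j, hj⟩ := List.get_of_mem (Finset.mem_toList.2 hv)
    refine ⟨⟨(j:ℕ), lt_of_lt_of_le (hlen ▸ j.isLt) hcard⟩, ?_⟩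
    simp only [hc]
    rw [dif_pos (by exact j.isLt)]
    simpa using hj
  refine ⟨c, ?_⟩
  set B : ℝ := C * 2 ^ a * (2:ℝ) ^ (-(Q:ℝ)) + (2:ℝ) ^ (-(R:ℝ)/m) with hB
  have hB0 : 0 ≤ B := by positivity
  -- pointwise bound
  have h2pos : ∀ y : ℝ, (0:ℝ) < (2:ℝ) ^ y := fun y => Real.rpow_pos_of_pos two_pos y
  have claim : ∀ z : V, (⨅ i, ENNReal.ofReal ‖z - c i‖)
      ≤ ENNReal.ofReal (B * (1 + ‖z‖ ^ (1 + δ))) := by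
    intro z
    have hx0 : 0 ≤ ‖z‖ := norm_nonneg z
    have hxd0 : 0 ≤ ‖z‖ ^ (1+δ) := Real.rpow_nonneg hx0 _
    have finish : ∀ v ∈ S, ‖z - v‖ ≤ B * (1 + ‖z‖ ^ (1+δ)) →
        (⨅ i, ENNReal.ofReal ‖z - c i‖) ≤ ENNReal.ofReal (B * (1 + ‖z‖ ^ (1+δ))) := by
      intro v hv hle
      obtain ⟨i, hi⟩ := hmemc v hv
      refine le_trans (iInf_le _ i) ?_
      rw [hi]
      exact ENNReal.ofReal_le_ofReal hle
    rcases lt_or_ge ‖z‖ ((2:ℝ) ^ (a*(R+1))) with hcase | hcase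
    · -- covered region: find the first annulus containing z
      have hpR : ‖z‖ < (2:ℝ) ^ (a*(R+1)) := hcase
      have hex : ∃ k, ‖z‖ < (2:ℝ) ^ (a*(k+1)) := ⟨R, hpR⟩
      set k := Nat.find hex with hkdef
      have hpk : ‖z‖ < (2:ℝ) ^ (a*(k+1)) := Nat.find_spec hex
      have hkR : k ≤ R := Nat.find_min' hex hpR
      obtain ⟨v, hvS, hvle⟩ := hskcov k z (le_of_lt hpk)
      have hvS' : v ∈ S := Finset.mem_insert_of_mem
        (Finset.mem_biUnion.2 ⟨k, Finset.mem_range.2 (by omega), hvS⟩)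
      apply finish v hvS'
      refine le_trans hvle ?_
      -- mesh estimate
      have hnkge : (2:ℝ) ^ ((Q:ℝ)-(k:ℝ)) ≤ ((nk k : ℕ) : ℝ) := by
        have h1 : ((nk k : ℕ):ℝ) = (2:ℝ) ^ (((Q - k : ℕ):ℝ)) := by
          simp only [hnk]; rw [Real.rpow_natCast]; push_cast; ring
        rw [h1]
        apply Real.rpow_le_rpow_of_exponent_le one_le_two
        rcases le_or_gt k Q with h | h
        · rw [Nat.cast_sub h]
        · have h2 : Q - k = 0 := by omega
          rw [h2]
          have : (Q:ℝ) ≤ (k:ℝ) := by exact_mod_cast h.le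
          simp; linarith
      have hstep1 : C * rk k / (nk k : ℕ) ≤
          C * (2:ℝ) ^ (((a*(k+1) : ℕ):ℝ)) * (2:ℝ) ^ ((k:ℝ)-(Q:ℝ)) := by
        have hrkr : rk k = (2:ℝ) ^ (((a*(k+1) : ℕ):ℝ)) := (Real.rpow_natCast 2 _).symm
        set A := (2:ℝ) ^ (((a*(k+1) : ℕ):ℝ)) with hA
        set u := (2:ℝ) ^ ((k:ℝ)-(Q:ℝ)) with hu
        set w := (2:ℝ) ^ ((Q:ℝ)-(k:ℝ)) with hw
        have huw : u * w = 1 := by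
          rw [hu, hw, ← Real.rpow_add two_pos]
          norm_num
        have hnkr : (0:ℝ) < ((nk k : ℕ):ℝ) := by exact_mod_cast hnkpos k
        rw [hrkr, div_le_iff₀ hnkr]
        calc C * A = C * A * u * w := by rw [mul_assoc (C*A), huw]; ring
        _ ≤ C * A * u * ((nk k : ℕ):ℝ) := by
            apply mul_le_mul_of_nonneg_left hnkge
            have := h2pos ((k:ℝ)-(Q:ℝ))
            have := h2pos (((a*(k+1) : ℕ):ℝ))
            positivity
      rcases Nat.eq_zero_or_pos k with hk0 | hk1
      · -- innermost ball
        have hb : C * (2:ℝ) ^ (((a*(k+1) : ℕ):ℝ)) * (2:ℝ) ^ ((k:ℝ)-(Q:ℝ))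
            = C * 2 ^ a * (2:ℝ) ^ (-(Q:ℝ)) := by
          rw [hk0]
          push_cast
          rw [mul_one, zero_sub, Real.rpow_natCast]
        refine le_trans hstep1 ?_
        rw [hb]
        have hB1 : C * 2 ^ a * (2:ℝ) ^ (-(Q:ℝ)) ≤ B := by
          rw [hB]; have := (h2pos (-(R:ℝ)/m)).le; linarith
        have hBB : B * 1 ≤ B * (1 + ‖z‖ ^ (1+δ)) := by
          apply mul_le_mul_of_nonneg_left _ hB0
          linarith
        linarith [hBB]
      · -- outer annulus : ‖z‖ ≥ 2^(a k)
        have hxk : (2:ℝ) ^ (((a*k : ℕ):ℝ)) ≤ ‖z‖ := by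
          have hnot := Nat.find_min hex (show k - 1 < k by omega)
          push_neg at hnot
          rw [show k - 1 + 1 = k from by omega] at hnot
          rw [Real.rpow_natCast]
          exact hnot
        have hx1 : (1:ℝ) ≤ ‖z‖ := by
          refine le_trans ?_ hxk
          have : (2:ℝ) ^ (0:ℝ) ≤ (2:ℝ) ^ (((a*k : ℕ):ℝ)) := by
            apply Real.rpow_le_rpow_of_exponent_le one_le_two
            positivity
          simpa using this
        -- 2^(k(a+1)) ≤ ‖z‖^(1+δ)
        have hexple : ((a:ℝ)+1)/a ≤ 1 + δ := by
          rw [div_le_iff₀ ha0]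
          nlinarith
        have e1 : (2:ℝ) ^ (((k*(a+1) : ℕ):ℝ))
            = ((2:ℝ) ^ (((a*k : ℕ):ℝ))) ^ (((a:ℝ)+1)/a) := by
          rw [← Real.rpow_mul (by norm_num : (0:ℝ) ≤ 2)]
          congr 1
          push_cast
          field_simp
        have e2 : ((2:ℝ) ^ (((a*k : ℕ):ℝ))) ^ (((a:ℝ)+1)/a) ≤ ‖z‖ ^ (((a:ℝ)+1)/a) :=
          Real.rpow_le_rpow (h2pos _).le hxk (by positivity)
        have e3 : ‖z‖ ^ (((a:ℝ)+1)/a) ≤ ‖z‖ ^ (1+δ) :=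
          Real.rpow_le_rpow_of_exponent_le hx1 hexple
        have ekey : (2:ℝ) ^ (((k*(a+1) : ℕ):ℝ)) ≤ ‖z‖ ^ (1+δ) :=
          e1 ▸ le_trans e2 e3
        -- assemble
        have hsplit : C * (2:ℝ) ^ (((a*(k+1) : ℕ):ℝ)) * (2:ℝ) ^ ((k:ℝ)-(Q:ℝ))
            = (C * 2 ^ a * (2:ℝ) ^ (-(Q:ℝ))) * (2:ℝ) ^ (((k*(a+1) : ℕ):ℝ)) := by
          rw [show ((2:ℝ) ^ a : ℝ) = (2:ℝ) ^ ((a:ℕ):ℝ) from (Real.rpow_natCast 2 a).symm]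
          rw [mul_assoc, mul_assoc, mul_assoc, ← Real.rpow_add two_pos,
            ← Real.rpow_add two_pos, ← Real.rpow_add two_pos]
          congr 2
          push_cast
          ring
        refine le_trans hstep1 ?_
        rw [hsplit]
        have hpos1 : (0:ℝ) ≤ C * 2 ^ a * (2:ℝ) ^ (-(Q:ℝ)) := by
          have := (h2pos (-(Q:ℝ))).le; positivity
        calc (C * 2 ^ a * (2:ℝ) ^ (-(Q:ℝ))) * (2:ℝ) ^ (((k*(a+1) : ℕ):ℝ))
            ≤ (C * 2 ^ a * (2:ℝ) ^ (-(Q:ℝ))) * ‖z‖ ^ (1+δ) :=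
              mul_le_mul_of_nonneg_left ekey hpos1
          _ ≤ B * (1 + ‖z‖ ^ (1+δ)) := by
              rw [hB]
              have h5 := (h2pos (-(R:ℝ)/m)).le
              nlinarith [hxd0, hpos1]
    · -- tail region : use the center 0
      have hxpos : 0 < ‖z‖ := lt_of_lt_of_le (by positivity) hcase
      apply finish 0 h0S
      rw [sub_zero]
      -- ‖z‖ ≤ 2^(-R/m) ‖z‖^(1+δ)
      have hc' : (2:ℝ) ^ (((a*(R+1) : ℕ):ℝ)) ≤ ‖z‖ := by
        rw [Real.rpow_natCast]; exact hcase
      have hxδ : (2:ℝ) ^ ((R:ℝ)/m) ≤ ‖z‖ ^ δ := by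
        have h1 : ((2:ℝ) ^ (((a*(R+1) : ℕ):ℝ))) ^ δ ≤ ‖z‖ ^ δ :=
          Real.rpow_le_rpow (h2pos _).le hc' hδ.le
        refine le_trans ?_ h1
        rw [← Real.rpow_mul (by norm_num : (0:ℝ) ≤ 2)]
        apply Real.rpow_le_rpow_of_exponent_le one_le_two
        have h2 : ((a*(R+1) : ℕ):ℝ) * δ = ((a:ℝ)*δ) * (R+1) := by push_cast; ring
        rw [h2]
        have h3 : (R:ℝ)/m ≤ (R:ℝ) := by
          apply div_le_self (by positivity) hm1'
        nlinarith
      have hx1δ : ‖z‖ ^ (1+δ) = ‖z‖ * ‖z‖ ^ δ := by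
        rw [Real.rpow_add hxpos, Real.rpow_one]
      have huv : (2:ℝ) ^ (-(R:ℝ)/m) * (2:ℝ) ^ ((R:ℝ)/m) = 1 := by
        rw [← Real.rpow_add two_pos,
          show -(R:ℝ)/m + (R:ℝ)/m = 0 by ring, Real.rpow_zero]
      have hkey : ‖z‖ ≤ (2:ℝ) ^ (-(R:ℝ)/m) * ‖z‖ ^ (1+δ) := by
        rw [hx1δ]
        calc ‖z‖ = ((2:ℝ) ^ (-(R:ℝ)/m) * (2:ℝ) ^ ((R:ℝ)/m)) * ‖z‖ := by rw [huv]; ring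
        _ ≤ (2:ℝ) ^ (-(R:ℝ)/m) * (‖z‖ ^ δ * ‖z‖) := by
            rw [mul_assoc]
            apply mul_le_mul_of_nonneg_left _ (h2pos _).le
            exact mul_le_mul_of_nonneg_right hxδ hx0
        _ = (2:ℝ) ^ (-(R:ℝ)/m) * (‖z‖ * ‖z‖ ^ δ) := by ring
      refine le_trans hkey ?_
      have h6 : (2:ℝ) ^ (-(R:ℝ)/m) ≤ B := by
        rw [hB]
        have := mul_pos (mul_pos hCpos (pow_pos two_pos a)) (h2pos (-(Q:ℝ)))
        linarith
      have h7 : ‖z‖ ^ (1+δ) ≤ 1 + ‖z‖ ^ (1+δ) := by linarith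
      calc (2:ℝ) ^ (-(R:ℝ)/m) * ‖z‖ ^ (1+δ) ≤ B * ‖z‖ ^ (1+δ) :=
            mul_le_mul_of_nonneg_right h6 hxd0
      _ ≤ B * (1 + ‖z‖ ^ (1+δ)) := mul_le_mul_of_nonneg_left h7 hB0
  -- integrate
  calc (∫⁻ z, ⨅ i, ENNReal.ofReal ‖z - c i‖ ∂P)
      ≤ ∫⁻ z, ENNReal.ofReal (B * (1 + ‖z‖ ^ (1 + δ))) ∂P := lintegral_mono claim
    _ ≤ ENNReal.ofReal ((2:ℝ) ^ (-(R:ℝ)/m) * (E * (∫⁻ z, ENNReal.ofReal (‖z‖ ^ (1 + δ)) ∂P).toReal + E)) := by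
        set M := ∫⁻ z, ENNReal.ofReal (‖z‖ ^ (1 + δ)) ∂P with hMdef
        have hint : (∫⁻ z, ENNReal.ofReal (B * (1 + ‖z‖ ^ (1 + δ))) ∂P)
            = ENNReal.ofReal B * (1 + M) := by
          have heq : ∀ z : V, ENNReal.ofReal (B * (1 + ‖z‖ ^ (1 + δ)))
              = ENNReal.ofReal B * (1 + ENNReal.ofReal (‖z‖ ^ (1 + δ))) := by
            intro z
            rw [ENNReal.ofReal_mul hB0,
              ENNReal.ofReal_add one_pos.le (Real.rpow_nonneg (norm_nonneg z) _),
              ENNReal.ofReal_one]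
          simp_rw [heq]
          rw [lintegral_const_mul' _ _ ENNReal.ofReal_ne_top,
            lintegral_add_left measurable_const, lintegral_one, measure_univ]
        have hBE : B ≤ (2:ℝ) ^ (-(R:ℝ)/m) * E := by
          have hq : (2:ℝ) ^ (-(Q:ℝ)) ≤ 8 * (2:ℝ) ^ (-(R:ℝ)/m) := by
            have h1 : (2:ℝ) ^ (-(Q:ℝ)) ≤ (2:ℝ) ^ ((3:ℝ) + (-(R:ℝ)/m)) := by
              apply Real.rpow_le_rpow_of_exponent_le one_le_two
              rw [neg_div]
              linarith
            rw [Real.rpow_add two_pos] at h1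
            rw [show (2:ℝ) ^ (3:ℝ) = 8 by
              rw [show (3:ℝ) = ((3:ℕ):ℝ) by norm_num, Real.rpow_natCast]; norm_num] at h1
            exact h1
          rw [hE, hB]
          have h2 := (h2pos (-(R:ℝ)/m)).le
          nlinarith [mul_le_mul_of_nonneg_left hq (by positivity : (0:ℝ) ≤ C * 2 ^ a)]
        calc (∫⁻ z, ENNReal.ofReal (B * (1 + ‖z‖ ^ (1 + δ))) ∂P)
            = ENNReal.ofReal B * (1 + M) := hint
          _ ≤ ENNReal.ofReal ((2:ℝ) ^ (-(R:ℝ)/m) * E) * (1 + M) :=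
              mul_le_mul_of_nonneg_right (ENNReal.ofReal_le_ofReal hBE) (zero_le)
          _ = ENNReal.ofReal ((2:ℝ) ^ (-(R:ℝ)/m) * (E * M.toReal + E)) := by
              have h1 : (1:ℝ≥0∞) + M = ENNReal.ofReal (1 + M.toReal) := by
                rw [ENNReal.ofReal_add one_pos.le ENNReal.toReal_nonneg,
                  ENNReal.ofReal_one, ENNReal.ofReal_toReal hM]
              have h3 : (0:ℝ) ≤ (2:ℝ) ^ (-(R:ℝ)/m) * E := by
                have := (h2pos (-(R:ℝ)/m)).le
                positivity
              rw [h1, ← ENNReal.ofReal_mul h3]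
              congr 1
              ring
end
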